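/- Under the hypotheses of the previous statement, define the output distribution of approximate rejection sampling by P̃(x) = P(x)/N for x ∉ bad and P̃(x) = κ_A·Z_Q·Q(x)/N for x ∈ bad, where N = Z + ∑_{x∈bad}(κ_A·Z_Q·Q(x) − P(x)) is the normalizing constant. Then the Bhattacharyya-type fidelity satisfies ∑_x √(P̃(x)·P(x)/Z) ≥ 1 − ε. -/
import Mathlib


theorem fidelity_lower_bound {X : Type*} [Fintype X] (P Q : X → ℝ) (κA ZQ ε : ℝ)
    (hP : ∀ x, 0 ≤ P x) (hQ : ∀ x, 0 < Q x) (hQsum : ∑ x, Q x = 1)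
    (hZ : 0 < ∑ x, P x) (hκ : 0 < κA) (hZQ : 0 < ZQ)
    (hε0 : 0 ≤ ε) (hε1 : ε < 1)
    (hbad : ∑ x ∈ Finset.univ.filter (fun x => P x > κA * ZQ * Q x), (P x - κA * ZQ * Q x)
              ≤ ε * ∑ x, P x) :
    let Z := ∑ x, P x
    let N := Z + ∑ x ∈ Finset.univ.filter (fun x => P x > κA * ZQ * Q x),
      (κA * ZQ * Q x - P x)
    let Pt : X → ℝ := fun x => if P x > κA * ZQ * Q x then κA * ZQ * Q x / N else P x / N
    ∑ x, Real.sqrt (Pt x * (P x / Z)) ≥ 1 - ε := by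
  intro Z N Pt
  set m : X → ℝ := fun x => if P x > κA * ZQ * Q x then κA * ZQ * Q x else P x with hm
  have hm_nonneg : ∀ x, 0 ≤ m x := by
    intro x
    simp only [hm]
    split
    · have h1 := hQ x
      have h2 : 0 < ZQ * Q x := mul_pos hZQ h1
      nlinarith
    · exact hP x
  have hmP : ∀ x, m x ≤ P x := by
    intro x
    simp only [hm]
    split_ifs with h
    · linarith
    · exact le_rfl
  have hsum_m : ∑ x, m x = N := by
    have : ∀ x, m x = P x + (if P x > κA * ZQ * Q x then κA * ZQ * Q x - P x else 0) := by
      intro x; simp only [hm]; split <;> ring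
    rw [Finset.sum_congr rfl (fun x _ => this x), Finset.sum_add_distrib,
      ← Finset.sum_filter]
  have hNle : N ≤ Z := by
    have : ∑ x ∈ Finset.univ.filter (fun x => P x > κA * ZQ * Q x),
        (κA * ZQ * Q x - P x) ≤ 0 := by
      apply Finset.sum_nonpos
      intro x hx
      have := (Finset.mem_filter.mp hx).2
      linarith
    simp only [N]; linarith
  have hNge : (1 - ε) * Z ≤ N := by
    have h1 : ∑ x ∈ Finset.univ.filter (fun x => P x > κA * ZQ * Q x),
        (κA * ZQ * Q x - P x)
        = - ∑ x ∈ Finset.univ.filter (fun x => P x > κA * ZQ * Q x),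
        (P x - κA * ZQ * Q x) := by
      rw [← Finset.sum_neg_distrib]
      exact Finset.sum_congr rfl (fun x _ => by ring)
    simp only [N, h1]
    nlinarith [hbad]
  have hNpos : 0 < N := lt_of_lt_of_le (by nlinarith) hNge
  have hsqrtNZ : 0 < Real.sqrt (N * Z) := Real.sqrt_pos.mpr (by positivity)
  have key : ∀ x, m x / Real.sqrt (N * Z) ≤ Real.sqrt (Pt x * (P x / Z)) := by
    intro x
    have h1 : Pt x * (P x / Z) = (m x * P x) / (N * Z) := by
      simp only [Pt, hm]
      split <;> field_simp <;> ring
    rw [h1, Real.sqrt_div (mul_nonneg (hm_nonneg x) (hP x)) (N * Z)]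
    apply div_le_div_of_nonneg_right ?_ hsqrtNZ.le
    calc m x = Real.sqrt (m x * m x) := by
          rw [Real.sqrt_mul_self (hm_nonneg x)]
      _ ≤ Real.sqrt (m x * P x) :=
          Real.sqrt_le_sqrt (mul_le_mul_of_nonneg_left (hmP x) (hm_nonneg x))
  have hsum_ge : N / Real.sqrt (N * Z) ≤ ∑ x, Real.sqrt (Pt x * (P x / Z)) := by
    have h := Finset.sum_le_sum (fun x (_ : x ∈ Finset.univ) => key x)
    rwa [← Finset.sum_div, hsum_m] at h
  have h2 : Real.sqrt (N * Z) ≤ Z := by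
    calc Real.sqrt (N * Z) ≤ Real.sqrt (Z * Z) :=
          Real.sqrt_le_sqrt (by nlinarith)
      _ = Z := Real.sqrt_mul_self hZ.le
  have h3 : N / Z ≤ N / Real.sqrt (N * Z) :=
    div_le_div_of_nonneg_left hNpos.le hsqrtNZ h2
  have h4 : 1 - ε ≤ N / Z := by
    rw [le_div_iff₀ hZ]
    exact hNge
  linarith
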